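/- Reduction to Max-Reward-Light (submodular case, improved constant): Let (A, f, c) be a multi-agent contract instance with monotone submodular f and A nonempty, let B ∈ (0,1] be a budget, let φ be a BEST objective, and let γ ≥ 1. Suppose S ⊆ L satisfies p(S) ≤ B and γ·f(S) ≥ Max-Reward-Light(B). Then there exists a set T ⊆ A with p(T) ≤ B, where T is either a singleton or a subset of S, such that (6γ + 1)·φ(T) ≥ Max-φ(B). -/

import Mathlib

open scoped BigOperators ENNReal
open Finset

/-- Marginal contribution of agent `i` to set `S`: `f_S(i) = f(S) - f(S \ {i})`. -/
noncomputable def marginal {α : Type*} [DecidableEq α] (f : Finset α → ℝ) (S : Finset α)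
    (i : α) : ℝ :=
  f S - f (S.erase i)

/-- Payment needed to incentivize `S`, valued in `[0,∞]`, with the conventions
`0/0 = 0` and `x/0 = ∞` for `x > 0` (these hold for ENNReal division). -/
noncomputable def payment {α : Type*} [DecidableEq α] (f : Finset α → ℝ) (c : α → ℝ)
    (S : Finset α) : ℝ≥0∞ :=
  ∑ i ∈ S, ENNReal.ofReal (c i) / ENNReal.ofReal (marginal f S i)

/-- The principal's profit from incentivizing `S`: `g(S) = (1 - p(S)) · f(S)`. -/
noncomputable def profit {α : Type*} [DecidableEq α] (f : Finset α → ℝ) (c : α → ℝ)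
    (S : Finset α) : ℝ :=
  (1 - (payment f c S).toReal) * f S

/-- `f` is monotone. -/
def IsMonotoneFn {α : Type*} (f : Finset α → ℝ) : Prop :=
  ∀ ⦃S T : Finset α⦄, S ⊆ T → f S ≤ f T

/-- `f` is subadditive. -/
def IsSubadditive {α : Type*} [DecidableEq α] (f : Finset α → ℝ) : Prop :=
  ∀ S T : Finset α, f (S ∪ T) ≤ f S + f T

/-- `f` is submodular (decreasing marginal values). -/
def IsSubmodular {α : Type*} [DecidableEq α] (f : Finset α → ℝ) : Prop :=
  ∀ ⦃S T : Finset α⦄, S ⊆ T → ∀ i ∉ T, f (insert i T) - f T ≤ f (insert i S) - f S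

/-- `f` is additive. -/
def IsAdditive {α : Type*} [DecidableEq α] (f : Finset α → ℝ) : Prop :=
  ∀ S : Finset α, f S = ∑ i ∈ S, f {i}

/-- `f` is XOS: a finite max of nonnegative additive functions. -/
def IsXOS {α : Type*} (f : Finset α → ℝ) : Prop :=
  ∃ (k : ℕ) (a : Fin (k + 1) → α → ℝ),
    (∀ j i, 0 ≤ a j i) ∧
    ∀ S : Finset α, f S = Finset.univ.sup' Finset.univ_nonempty (fun j => ∑ i ∈ S, a j i)

/-- Agent `i` is light: it can be incentivized with payment at most `1/2`. -/
def isLight {α : Type*} [DecidableEq α] (f : Finset α → ℝ) (c : α → ℝ) (i : α) : Prop :=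
  payment f c {i} ≤ ENNReal.ofReal (1 / 2)

/-- `S` is budget-feasible for budget `B`. -/
def feasible {α : Type*} [DecidableEq α] (f : Finset α → ℝ) (c : α → ℝ) (B : ℝ)
    (S : Finset α) : Prop :=
  payment f c S ≤ ENNReal.ofReal B

/-- `S` is a budget-feasible set of light agents. -/
def feasibleLight {α : Type*} [DecidableEq α] (f : Finset α → ℝ) (c : α → ℝ) (B : ℝ)
    (S : Finset α) : Prop :=
  (∀ i ∈ S, isLight f c i) ∧ payment f c S ≤ ENNReal.ofReal B

/-- The maximum (supremum) value of objective `φ` over sets satisfying `P`. -/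
noncomputable def maxVal {α : Type*} (φ : Finset α → ℝ) (P : Finset α → Prop) : ℝ :=
  sSup (φ '' {S | P S})

/-- `φ` is a BEST objective for the instance `(f, c)`: it is nonnegative, sandwiched between
profit and reward, and satisfies `φ(S) ≤ f(S \ {i}) + φ({i})` for `i ∈ S`. -/
def IsBEST {α : Type*} [DecidableEq α] (f : Finset α → ℝ) (c : α → ℝ)
    (φ : Finset α → ℝ) : Prop :=
  (∀ S, 0 ≤ φ S) ∧
  (∀ S, φ S ≤ f S) ∧
  (∀ S, payment f c S ≤ 1 → (1 - (payment f c S).toReal) * f S ≤ φ S) ∧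
  (∀ S, ∀ i ∈ S, φ S ≤ f (S.erase i) + φ {i})

/-- `φ` is a BEST objective for the instance `(f, c)` restricted to sets satisfying `P`. -/
def IsBESTOn {α : Type*} [DecidableEq α] (f : Finset α → ℝ) (c : α → ℝ)
    (P : Finset α → Prop) (φ : Finset α → ℝ) : Prop :=
  (∀ S, P S → 0 ≤ φ S) ∧
  (∀ S, P S → φ S ≤ f S) ∧
  (∀ S, P S → payment f c S ≤ 1 → (1 - (payment f c S).toReal) * f S ≤ φ S) ∧
  (∀ S, P S → ∀ i ∈ S, φ S ≤ f (S.erase i) + φ {i})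

section AuxLemmas
variable {α : Type*} [DecidableEq α] {f : Finset α → ℝ} {c : α → ℝ} {S T : Finset α}

lemma marg_mono (hsub : IsSubmodular f) (hTS : T ⊆ S) {i : α} (hiT : i ∈ T) :
    marginal f S i ≤ marginal f T i := by
  have hiS : i ∈ S := hTS hiT
  have h := hsub (Finset.erase_subset_erase i hTS) i (Finset.notMem_erase i S)
  rwa [Finset.insert_erase hiS, Finset.insert_erase hiT] at h

lemma pay_le_sum (hsub : IsSubmodular f) (hTS : T ⊆ S) :
    payment f c T ≤ ∑ i ∈ T, ENNReal.ofReal (c i) / ENNReal.ofReal (marginal f S i) := by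
  refine Finset.sum_le_sum fun i hi => ?_
  exact ENNReal.div_le_div_left (ENNReal.ofReal_le_ofReal (marg_mono hsub hTS hi)) _

lemma pay_mono (hsub : IsSubmodular f) (hTS : T ⊆ S) :
    payment f c T ≤ payment f c S :=
  (pay_le_sum hsub hTS).trans (Finset.sum_le_sum_of_subset hTS)

lemma subadd (hf0 : f ∅ = 0) (hmono : IsMonotoneFn f) (hsub : IsSubmodular f)
    (A B : Finset α) : f (A ∪ B) ≤ f A + f B := by
  induction B using Finset.induction_on with
  | empty => simp [hf0]
  | insert _ _ hi _ =>
    rename_i i B ih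
    by_cases hiAB : i ∈ A ∪ B
    · have h1 : A ∪ insert i B = A ∪ B := by
        rw [Finset.union_insert, Finset.insert_eq_self.mpr hiAB]
      rw [h1]
      have := hmono (Finset.subset_insert i B)
      linarith
    · have h := hsub (Finset.subset_union_right (s₁ := A)) i hiAB
      have h1 : A ∪ insert i B = insert i (A ∪ B) := by
        rw [Finset.union_insert]
      rw [h1]
      linarith

/-- A maximum-cardinality subset with weight at most `1/2`. -/
lemma pick (w : α → ℝ) (S : Finset α) :
    ∃ T ⊆ S, (∑ i ∈ T, w i ≤ 1/2) ∧
      ∀ j ∈ S, j ∉ T → 1/2 < (∑ i ∈ T, w i) + w j := by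
  classical
  set 𝒯 := S.powerset.filter (fun T => ∑ i ∈ T, w i ≤ 1/2) with h𝒯
  have hne : 𝒯.Nonempty := ⟨∅, by simp [h𝒯]⟩
  obtain ⟨T, hT, hmax⟩ := Finset.exists_max_image 𝒯 Finset.card hne
  rw [h𝒯, Finset.mem_filter, Finset.mem_powerset] at hT
  refine ⟨T, hT.1, hT.2, fun j hjS hjT => ?_⟩
  by_contra hle
  push_neg at hle
  have hmem : insert j T ∈ 𝒯 := by
    rw [h𝒯, Finset.mem_filter, Finset.mem_powerset]
    refine ⟨Finset.insert_subset hjS hT.1, ?_⟩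
    rwa [Finset.sum_insert hjT, add_comm]
  have := hmax _ hmem
  rw [Finset.card_insert_of_notMem hjT] at this
  omega

/-- Key decomposition: a light budget-feasible set contains a feasible subset whose payment is
at most `1/2` and whose reward is at least a third of the whole reward. -/
lemma key (hf0 : f ∅ = 0) (hfnn : ∀ S, 0 ≤ f S) (hmono : IsMonotoneFn f)
    (hsub : IsSubmodular f) (hc : ∀ i, 0 ≤ c i)
    {B : ℝ} (hB0 : 0 < B) (hB1 : B ≤ 1)
    {S : Finset α} (hSL : ∀ i ∈ S, isLight f c i)
    (hSfeas : payment f c S ≤ ENNReal.ofReal B) :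
    ∃ T ⊆ S, payment f c T ≤ ENNReal.ofReal B ∧
      payment f c T ≤ ENNReal.ofReal (1/2) ∧ f S ≤ 3 * f T := by
  classical
  set w : α → ℝ := fun i => if 0 < marginal f S i then c i / marginal f S i else 0 with hw
  have hwnn : ∀ i, 0 ≤ w i := by
    intro i
    rw [hw]
    dsimp only
    split
    · exact div_nonneg (hc i) (le_of_lt (by assumption))
    · exact le_refl 0
  have hterm : ∀ i ∈ S,
      ENNReal.ofReal (c i) / ENNReal.ofReal (marginal f S i) = ENNReal.ofReal (w i) := by
    intro i hi
    by_cases hm : 0 < marginal f S i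
    · rw [hw]; dsimp only; rw [if_pos hm, ENNReal.ofReal_div_of_pos hm]
    · have hm0 : ENNReal.ofReal (marginal f S i) = 0 :=
        ENNReal.ofReal_eq_zero.mpr (le_of_not_gt hm)
      have hci : c i = 0 := by
        by_contra hc0
        have hcpos : 0 < c i := lt_of_le_of_ne (hc i) (Ne.symm hc0)
        have hterm_top : ENNReal.ofReal (c i) / ENNReal.ofReal (marginal f S i) = ⊤ := by
          rw [hm0, ENNReal.div_zero (by simpa [ENNReal.ofReal_eq_zero] using not_le.mpr hcpos)]
        have hle : ENNReal.ofReal (c i) / ENNReal.ofReal (marginal f S i) ≤ payment f c S :=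
          Finset.single_le_sum (f := fun j => ENNReal.ofReal (c j) / ENNReal.ofReal (marginal f S j))
            (fun j _ => zero_le) hi
        rw [hterm_top] at hle
        have : payment f c S = ⊤ := top_le_iff.mp hle
        rw [this] at hSfeas
        exact (ENNReal.ofReal_ne_top (top_le_iff.mp hSfeas)).elim
      rw [hw]; dsimp only; rw [if_neg hm, hci]
      simp
  have hpayS : payment f c S = ENNReal.ofReal (∑ i ∈ S, w i) := by
    rw [ENNReal.ofReal_sum_of_nonneg (fun i _ => hwnn i)]
    exact Finset.sum_congr rfl hterm
  have htot : ∑ i ∈ S, w i ≤ B := by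
    rw [hpayS] at hSfeas
    exact (ENNReal.ofReal_le_ofReal_iff hB0.le).mp hSfeas
  have hsumT : ∀ T ⊆ S, payment f c T ≤ ENNReal.ofReal (∑ i ∈ T, w i) := by
    intro T hTS
    refine (pay_le_sum hsub hTS).trans ?_
    rw [ENNReal.ofReal_sum_of_nonneg (fun i _ => hwnn i)]
    exact le_of_eq (Finset.sum_congr rfl fun i hi => hterm i (hTS hi))
  have hsub_le_tot : ∀ T ⊆ S, ∑ i ∈ T, w i ≤ B := fun T hTS =>
    le_trans (Finset.sum_le_sum_of_subset_of_nonneg hTS fun i _ _ => hwnn i) htot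
  have hfeasT : ∀ T ⊆ S, payment f c T ≤ ENNReal.ofReal B := fun T hTS =>
    (hsumT T hTS).trans (ENNReal.ofReal_le_ofReal (hsub_le_tot T hTS))
  by_cases hbig : ∃ i0 ∈ S, 1/2 < w i0
  · obtain ⟨i0, hi0S, hi0⟩ := hbig
    set R := S.erase i0 with hR
    have hRsub : R ⊆ S := Finset.erase_subset i0 S
    have hsumR : ∑ i ∈ R, w i ≤ 1/2 := by
      have h1 : ∑ i ∈ R, w i + w i0 = ∑ i ∈ S, w i := Finset.sum_erase_add S w hi0S
      linarith
    have hsplit : f S ≤ f {i0} + f R := by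
      have hu : {i0} ∪ R = S := by
        rw [hR, ← Finset.insert_eq, Finset.insert_erase hi0S]
      calc f S = f ({i0} ∪ R) := by rw [hu]
        _ ≤ f {i0} + f R := subadd hf0 hmono hsub _ _
    have hpR : payment f c R ≤ ENNReal.ofReal (1/2) :=
      (hsumT R hRsub).trans (ENNReal.ofReal_le_ofReal hsumR)
    have hpI : payment f c {i0} ≤ ENNReal.ofReal (1/2) := hSL i0 hi0S
    rcases le_total (f {i0}) (f R) with h | h
    · exact ⟨R, hRsub, hfeasT R hRsub, hpR, by nlinarith [hfnn R]⟩
    · exact ⟨{i0}, Finset.singleton_subset_iff.mpr hi0S, hfeasT _ (by simpa using hi0S),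
        hpI, by nlinarith [hfnn {i0}]⟩
  · push_neg at hbig
    obtain ⟨T1, hT1S, hT1sum, hT1max⟩ := pick w S
    obtain ⟨T2, hT2S, hT2sum, hT2max⟩ := pick w (S \ T1)
    set T3 := (S \ T1) \ T2 with hT3
    have hT3S : T3 ⊆ S := (Finset.sdiff_subset).trans (Finset.sdiff_subset)
    have hT2S' : T2 ⊆ S := hT2S.trans Finset.sdiff_subset
    have hs1 : ∑ i ∈ S \ T1, w i + ∑ i ∈ T1, w i = ∑ i ∈ S, w i := Finset.sum_sdiff hT1S
    have hs2 : ∑ i ∈ T3, w i + ∑ i ∈ T2, w i = ∑ i ∈ S \ T1, w i := Finset.sum_sdiff hT2S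
    have hT3sum : ∑ i ∈ T3, w i ≤ 1/2 := by
      rcases Finset.eq_empty_or_nonempty T3 with h3 | h3
      · simp [h3]
      · obtain ⟨x, hx⟩ := h3
        have hxS1 : x ∈ S \ T1 := (Finset.sdiff_subset) hx
        have hxT2 : x ∉ T2 := (Finset.mem_sdiff.mp hx).2
        have hx2 := hT2max x hxS1 hxT2
        have hT2ne : T2.Nonempty := by
          rcases Finset.eq_empty_or_nonempty T2 with h2 | h2
          · exfalso
            rw [h2] at hx2
            simp at hx2
            have := hbig x (Finset.mem_sdiff.mp hxS1).1
            linarith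
          · exact h2
        obtain ⟨y, hy⟩ := hT2ne
        have hyS1 : y ∈ S \ T1 := hT2S hy
        have hy1 := hT1max y (Finset.mem_sdiff.mp hyS1).1 (Finset.mem_sdiff.mp hyS1).2
        have hwy : w y ≤ ∑ i ∈ T2, w i := Finset.single_le_sum (fun i _ => hwnn i) hy
        linarith
    have hunion : T1 ∪ (T2 ∪ T3) = S := by
      rw [hT3, Finset.union_sdiff_of_subset hT2S, Finset.union_sdiff_of_subset hT1S]
    have hsplit : f S ≤ f T1 + (f T2 + f T3) := by
      calc f S = f (T1 ∪ (T2 ∪ T3)) := by rw [hunion]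
        _ ≤ f T1 + f (T2 ∪ T3) := subadd hf0 hmono hsub _ _
        _ ≤ f T1 + (f T2 + f T3) := by linarith [subadd hf0 hmono hsub T2 T3]
    have hp1 : payment f c T1 ≤ ENNReal.ofReal (1/2) :=
      (hsumT T1 hT1S).trans (ENNReal.ofReal_le_ofReal hT1sum)
    have hp2 : payment f c T2 ≤ ENNReal.ofReal (1/2) :=
      (hsumT T2 hT2S').trans (ENNReal.ofReal_le_ofReal hT2sum)
    have hp3 : payment f c T3 ≤ ENNReal.ofReal (1/2) :=
      (hsumT T3 hT3S).trans (ENNReal.ofReal_le_ofReal hT3sum)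
    rcases le_total (f T1) (f T2) with h12 | h12
    · rcases le_total (f T2) (f T3) with h23 | h23
      · exact ⟨T3, hT3S, hfeasT T3 hT3S, hp3, by nlinarith [hfnn T3]⟩
      · exact ⟨T2, hT2S', hfeasT T2 hT2S', hp2, by nlinarith [hfnn T2]⟩
    · rcases le_total (f T1) (f T3) with h13 | h13
      · exact ⟨T3, hT3S, hfeasT T3 hT3S, hp3, by nlinarith [hfnn T3]⟩
      · exact ⟨T1, hT1S, hfeasT T1 hT1S, hp1, by nlinarith [hfnn T1]⟩
end AuxLemmas

/-- **Reduction to Max-Reward-Light (submodular case, improved constant).** -/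
theorem reduction_to_mrl_submodular {α : Type*} [DecidableEq α] [Fintype α] [Nonempty α]
    (f : Finset α → ℝ) (c : α → ℝ) (φ : Finset α → ℝ)
    (hf01 : ∀ S, f S ∈ Set.Icc (0 : ℝ) 1) (hf0 : f ∅ = 0)
    (hmono : IsMonotoneFn f) (hsubmod : IsSubmodular f) (hc : ∀ i, 0 ≤ c i)
    (hφ : IsBEST f c φ)
    (B : ℝ) (hB0 : 0 < B) (hB1 : B ≤ 1)
    (γ : ℝ) (hγ : 1 ≤ γ)
    (S : Finset α) (hSL : ∀ i ∈ S, isLight f c i)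
    (hSfeas : payment f c S ≤ ENNReal.ofReal B)
    (hSapprox : maxVal f (feasibleLight f c B) ≤ γ * f S) :
    ∃ T : Finset α,
      payment f c T ≤ ENNReal.ofReal B ∧
      (T.card = 1 ∨ T ⊆ S) ∧
      maxVal φ (feasible f c B) ≤ (6 * γ + 1) * φ T := by
  classical
  obtain ⟨hφ0, hφf, hφp, hφd⟩ := hφ
  have hγ0 : (0:ℝ) ≤ γ := le_trans zero_le_one hγ
  have hfnn : ∀ X : Finset α, 0 ≤ f X := fun X => (hf01 X).1
  obtain ⟨T0, hT0S, hT0B, hT0half, hT0f⟩ := key hf0 hfnn hmono hsubmod hc hB0 hB1 hSL hSfeas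
  -- `f S ≤ 6 * φ T0`
  have hT0p1 : payment f c T0 ≤ 1 :=
    hT0half.trans (ENNReal.ofReal_le_one.mpr (by norm_num))
  have ht : (payment f c T0).toReal ≤ 1/2 :=
    ENNReal.toReal_le_of_le_ofReal (by norm_num) hT0half
  have hφT0 := hφp T0 hT0p1
  have hfS6 : f S ≤ 6 * φ T0 := by nlinarith [hfnn T0]
  have hφT0nn : 0 ≤ φ T0 := hφ0 T0
  -- the optimum is attained
  have hne : (φ '' {X | feasible f c B X}).Nonempty :=
    ⟨φ ∅, ∅, by simp [feasible, payment], rfl⟩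
  obtain ⟨Sstar, hstar_feas, hSeq⟩ := hne.csSup_mem (Set.toFinite _)
  have hpstar : payment f c Sstar ≤ ENNReal.ofReal B := hstar_feas
  have hmax_eq : maxVal φ (feasible f c B) = φ Sstar := hSeq.symm
  have hMRL : ∀ X, feasibleLight f c B X → f X ≤ γ * f S := fun X hX =>
    le_trans (le_csSup (Set.Finite.bddAbove (Set.toFinite _))
      (Set.mem_image_of_mem f (show X ∈ {S | feasibleLight f c B S} from hX))) hSapprox
  -- at most one heavy agent in `Sstar`
  set H := Sstar.filter (fun i => ¬ isLight f c i) with hH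
  have hterm_le : ∀ i ∈ Sstar, ENNReal.ofReal (c i) / ENNReal.ofReal (marginal f Sstar i)
      ≤ payment f c Sstar := fun i hi =>
    Finset.single_le_sum
      (f := fun j => ENNReal.ofReal (c j) / ENNReal.ofReal (marginal f Sstar j))
      (fun j _ => zero_le) hi
  have hHheavy : ∀ i ∈ H, ENNReal.ofReal (1/2)
      < ENNReal.ofReal (c i) / ENNReal.ofReal (marginal f Sstar i) := by
    intro i hi
    rw [hH, Finset.mem_filter] at hi
    have h2 : payment f c {i} ≤ ENNReal.ofReal (c i) / ENNReal.ofReal (marginal f Sstar i) := by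
      have := pay_le_sum (c := c) hsubmod (Finset.singleton_subset_iff.mpr hi.1)
      simpa using this
    exact lt_of_lt_of_le (not_le.mp hi.2) h2
  have hHcard : H.card ≤ 1 := by
    by_contra hcard
    push_neg at hcard
    obtain ⟨i, hi, j, hj, hij⟩ := Finset.one_lt_card.mp hcard
    have hiS : i ∈ Sstar := (Finset.filter_subset _ _) hi
    have hjS : j ∈ Sstar := (Finset.filter_subset _ _) hj
    have hsubset : ({i, j} : Finset α) ⊆ Sstar := by
      intro x hx
      rcases Finset.mem_insert.mp hx with h | h
      · exact h ▸ hiS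
      · exact (Finset.mem_singleton.mp h) ▸ hjS
    have hsum : (ENNReal.ofReal (c i) / ENNReal.ofReal (marginal f Sstar i)) +
        (ENNReal.ofReal (c j) / ENNReal.ofReal (marginal f Sstar j)) ≤ payment f c Sstar := by
      calc (ENNReal.ofReal (c i) / ENNReal.ofReal (marginal f Sstar i)) +
          (ENNReal.ofReal (c j) / ENNReal.ofReal (marginal f Sstar j))
          = ∑ x ∈ ({i, j} : Finset α),
              ENNReal.ofReal (c x) / ENNReal.ofReal (marginal f Sstar x) :=
            (Finset.sum_pair (f := fun x => ENNReal.ofReal (c x) / ENNReal.ofReal (marginal f Sstar x)) hij).symm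
        _ ≤ payment f c Sstar := Finset.sum_le_sum_of_subset hsubset
    have hchain : payment f c Sstar < payment f c Sstar := by
      calc payment f c Sstar ≤ ENNReal.ofReal B := hpstar
        _ ≤ ENNReal.ofReal 1 := ENNReal.ofReal_le_ofReal hB1
        _ = ENNReal.ofReal (1/2) + ENNReal.ofReal (1/2) := by
            rw [← ENNReal.ofReal_add (by norm_num) (by norm_num)]; norm_num
        _ < (ENNReal.ofReal (c i) / ENNReal.ofReal (marginal f Sstar i)) +
            (ENNReal.ofReal (c j) / ENNReal.ofReal (marginal f Sstar j)) :=
          lt_of_lt_of_le (ENNReal.add_lt_add_right ENNReal.ofReal_ne_top (hHheavy i hi))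
            (add_le_add_right (hHheavy j hj).le _)
        _ ≤ payment f c Sstar := hsum
    exact lt_irrefl _ hchain
  rcases Nat.le_one_iff_eq_zero_or_eq_one.mp hHcard with h0 | h1
  · -- no heavy agent: `Sstar` itself is a feasible light set
    have hHempty : H = ∅ := Finset.card_eq_zero.mp h0
    have hall : ∀ i ∈ Sstar, isLight f c i := by
      intro i hi
      by_contra hl
      have : i ∈ H := Finset.mem_filter.mpr ⟨hi, hl⟩
      rw [hHempty] at this
      exact absurd this (Finset.notMem_empty i)
    have hbound : f Sstar ≤ γ * f S := hMRL Sstar ⟨hall, hpstar⟩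
    refine ⟨T0, hT0B, Or.inr hT0S, ?_⟩
    rw [hmax_eq]
    have h1 : γ * f S ≤ γ * (6 * φ T0) := mul_le_mul_of_nonneg_left hfS6 hγ0
    have h2 : φ Sstar ≤ f Sstar := hφf Sstar
    nlinarith
  · -- exactly one heavy agent `istar`
    obtain ⟨istar, hHeq⟩ := Finset.card_eq_one.mp h1
    have histar_mem : istar ∈ H := hHeq ▸ Finset.mem_singleton_self istar
    have hiS : istar ∈ Sstar := (Finset.filter_subset _ _) histar_mem
    have hlightE : ∀ i ∈ Sstar.erase istar, isLight f c i := by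
      intro i hi
      by_contra hl
      have hmem : i ∈ H := Finset.mem_filter.mpr ⟨(Finset.mem_erase.mp hi).2, hl⟩
      rw [hHeq] at hmem
      exact (Finset.mem_erase.mp hi).1 (Finset.mem_singleton.mp hmem)
    have hfeasE : payment f c (Sstar.erase istar) ≤ ENNReal.ofReal B :=
      (pay_mono hsubmod (Finset.erase_subset istar Sstar)).trans hpstar
    have hMRLe : f (Sstar.erase istar) ≤ γ * f S := hMRL _ ⟨hlightE, hfeasE⟩
    have hfeasI : payment f c {istar} ≤ ENNReal.ofReal B := by
      have h2 : payment f c {istar}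
          ≤ ENNReal.ofReal (c istar) / ENNReal.ofReal (marginal f Sstar istar) := by
        have := pay_le_sum (c := c) hsubmod (Finset.singleton_subset_iff.mpr hiS)
        simpa using this
      exact h2.trans ((hterm_le istar hiS).trans hpstar)
    have hdecomp : φ Sstar ≤ f (Sstar.erase istar) + φ {istar} := hφd Sstar istar hiS
    have h1 : γ * f S ≤ γ * (6 * φ T0) := mul_le_mul_of_nonneg_left hfS6 hγ0
    by_cases hcmp : φ {istar} ≤ φ T0
    · refine ⟨T0, hT0B, Or.inr hT0S, ?_⟩
      rw [hmax_eq]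
      nlinarith
    · refine ⟨{istar}, hfeasI, Or.inl (Finset.card_singleton istar), ?_⟩
      rw [hmax_eq]
      push_neg at hcmp
      have h3 : γ * (6 * φ T0) ≤ γ * (6 * φ {istar}) :=
        mul_le_mul_of_nonneg_left (by linarith) hγ0
      nlinarith
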